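/- Let k be a field and φ = [0; A_1, A_2, …] with deg A_i = 1 for all i, with associated Fibonacci polynomials F_n. Write A_i(X) = u_i X + v_i with u_i ≠ 0. If X^{n-1} = Σ_{i=0}^{n-1} z_i F_i(X), then the coefficients z'_i of X^n = Σ_{i=0}^{n} z'_i F_i(X) satisfy z'_i = u_i^{-1} z_{i-1} − u_{i+1}^{-1} v_{i+1} z_i − u_{i+2}^{-1} z_{i+1} (with z_{-1} := 0 and z_j := 0 for j ≥ n). -/

import Mathlib

open Polynomial Finset

theorem zeckendorf_recursion (k : Type*) [Field k]
    (u v : ℕ → k) (hu : ∀ i : ℕ, 1 ≤ i → u i ≠ 0)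
    (F : ℕ → Polynomial k)
    (hF0 : F 0 = 1)
    (hF1 : F 1 = C (u 1) * X + C (v 1))
    (hFrec : ∀ m : ℕ, F (m + 2) = (C (u (m + 2)) * X + C (v (m + 2))) * F (m + 1) + F m)
    (n : ℕ) (hn : 1 ≤ n)
    (z : ℕ → k)
    (hz : (X : Polynomial k) ^ (n - 1) = ∑ i ∈ Finset.range n, C (z i) * F i)
    (hztail : ∀ i : ℕ, n ≤ i → z i = 0)
    (z' : ℕ → k)
    (hz' : (X : Polynomial k) ^ n = ∑ i ∈ Finset.range (n + 1), C (z' i) * F i) :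
    ∀ i : ℕ, i ≤ n →
      z' i = (if i = 0 then 0 else (u i)⁻¹ * z (i - 1))
        - (u (i + 1))⁻¹ * v (i + 1) * z i - (u (i + 2))⁻¹ * z (i + 1) := by
  -- degree facts
  have hdeg : ∀ m : ℕ, (F m).natDegree ≤ m ∧ (F m).coeff m ≠ 0 := by
    have key : ∀ m : ℕ, ((F m).natDegree ≤ m ∧ (F m).coeff m ≠ 0) ∧
        ((F (m+1)).natDegree ≤ m+1 ∧ (F (m+1)).coeff (m+1) ≠ 0) := by
      intro m
      induction m with
      | zero =>
        refine ⟨⟨by rw [hF0]; simp, by rw [hF0]; simp⟩, ?_, ?_⟩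
        · rw [hF1]
          refine le_trans (natDegree_add_le _ _) ?_
          simp only [natDegree_C, max_le_iff]
          exact ⟨le_trans natDegree_mul_le (by simp), Nat.zero_le _⟩
        · rw [hF1]
          simp only [coeff_add, coeff_C_mul, coeff_X_one, coeff_C, mul_one]
          simpa using hu 1 le_rfl
      | succ m ih =>
        refine ⟨ih.2, ?_, ?_⟩
        · rw [hFrec m]
          refine le_trans (natDegree_add_le _ _) (max_le ?_ (le_trans ih.1.1 (by omega)))
          refine le_trans natDegree_mul_le ?_
          have h1 : (C (u (m + 2)) * X + C (v (m + 2))).natDegree ≤ 1 := by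
            refine le_trans (natDegree_add_le _ _) ?_
            simp only [natDegree_C, max_le_iff]
            exact ⟨le_trans natDegree_mul_le (by simp), Nat.zero_le _⟩
          have h2 := ih.2.1
          omega
        · have e : (C (u (m+2)) * X + C (v (m+2))) * F (m+1) + F m
              = C (u (m+2)) * (X * F (m+1)) + (C (v (m+2)) * F (m+1) + F m) := by ring
          rw [hFrec m, e]
          have h2 : (F (m+1)).coeff (m+2) = 0 :=
            coeff_eq_zero_of_natDegree_lt (lt_of_le_of_lt ih.2.1 (by omega))
          have h3 : (F m).coeff (m+2) = 0 :=
            coeff_eq_zero_of_natDegree_lt (lt_of_le_of_lt ih.1.1 (by omega))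
          have h4 : (X * F (m+1)).coeff (m+2) = (F (m+1)).coeff (m+1) := by
            rw [show m + 2 = (m+1) + 1 from rfl, coeff_X_mul]
          simp only [coeff_add, coeff_C_mul, h2, h3, h4, mul_zero, add_zero]
          exact mul_ne_zero (hu (m+2) (by omega)) ih.2.2
    exact fun m => (key m).1
  -- linear independence
  have hindep : ∀ (m : ℕ) (c : ℕ → k),
      (∑ i ∈ range m, C (c i) * F i) = 0 → ∀ i < m, c i = 0 := by
    intro m
    induction m with
    | zero => intro c _ i hi; omega
    | succ m ih =>
      intro c hc i hi
      have hcm : c m = 0 := by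
        have h0 := congrArg (fun p => Polynomial.coeff p m) hc
        simp only [finset_sum_coeff, coeff_C_mul, coeff_zero] at h0
        rw [Finset.sum_eq_single m] at h0
        · exact (mul_eq_zero.mp h0).resolve_right (hdeg m).2
        · intro b hb hbm
          have : (F b).coeff m = 0 :=
            coeff_eq_zero_of_natDegree_lt
              (lt_of_le_of_lt (hdeg b).1 (by simp at hb; omega))
          simp [this]
        · intro hm; exact absurd (self_mem_range_succ m) hm
      rcases Nat.lt_succ_iff_lt_or_eq.mp hi with hi' | hi'
      · refine ih c ?_ i hi'
        rw [Finset.sum_range_succ, hcm] at hc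
        simpa using hc
      · rw [hi']; exact hcm
  -- X * F i identity
  set G : ℕ → Polynomial k := fun i => Nat.rec 0 (fun j _ => F j) i with hG
  have hG0 : G 0 = 0 := rfl
  have hGs : ∀ j, G (j+1) = F j := fun j => rfl
  have hXF : ∀ i : ℕ, X * F i = C ((u (i+1))⁻¹) * (F (i+1) - C (v (i+1)) * F i - G i) := by
    intro i
    have hui : u (i+1) ≠ 0 := hu (i+1) (by omega)
    have key : F (i+1) - C (v (i+1)) * F i - G i = C (u (i+1)) * (X * F i) := by
      cases i with
      | zero => rw [hG0, hF1, hF0]; ring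
      | succ j => rw [hGs j, hFrec j]; ring
    rw [key, ← mul_assoc, ← C_mul, inv_mul_cancel₀ hui, C_1, one_mul]
  -- the candidate coefficients
  set a : ℕ → k := fun j => if j = 0 then 0 else (u j)⁻¹ * z (j - 1) with ha
  set b : ℕ → k := fun j => (u (j + 1))⁻¹ * v (j + 1) * z j with hb
  set d : ℕ → k := fun j => (u (j + 2))⁻¹ * z (j + 1) with hd
  obtain ⟨m, rfl⟩ : ∃ m, n = m + 1 := ⟨n - 1, by omega⟩
  rw [show m + 1 - 1 = m from rfl] at hz
  have hXn : (X : Polynomial k) ^ (m+1) = ∑ j ∈ range (m+2), C (a j - b j - d j) * F j := by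
    have e1 : (X : Polynomial k) ^ (m+1) = X * X ^ m := by ring
    rw [e1, hz, Finset.mul_sum]
    have e3 : ∀ i ∈ range (m+1), X * (C (z i) * F i) =
        C ((u (i+1))⁻¹ * z i) * F (i+1)
        - C ((u (i+1))⁻¹ * v (i+1) * z i) * F i
        - C ((u (i+1))⁻¹ * z i) * G i := by
      intro i _
      have h : X * (C (z i) * F i) = C (z i) * (X * F i) := by ring
      rw [h, hXF i]
      simp only [C_mul]
      ring
    rw [Finset.sum_congr rfl e3, Finset.sum_sub_distrib, Finset.sum_sub_distrib]
    have eRHS : ∑ j ∈ range (m+2), C (a j - b j - d j) * F j =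
        (∑ j ∈ range (m+2), C (a j) * F j) - (∑ j ∈ range (m+2), C (b j) * F j)
          - (∑ j ∈ range (m+2), C (d j) * F j) := by
      rw [← Finset.sum_sub_distrib, ← Finset.sum_sub_distrib]
      refine Finset.sum_congr rfl fun j _ => ?_
      simp only [C_sub]
      ring
    rw [eRHS]
    have eqA : ∑ j ∈ range (m+2), C (a j) * F j
        = ∑ i ∈ range (m+1), C ((u (i+1))⁻¹ * z i) * F (i+1) := by
      rw [Finset.sum_range_succ' (fun j => C (a j) * F j) (m+1)]
      simp only [ha]
      simp
    have eqB : ∑ j ∈ range (m+2), C (b j) * F j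
        = ∑ i ∈ range (m+1), C ((u (i+1))⁻¹ * v (i+1) * z i) * F i := by
      rw [Finset.sum_range_succ]
      have : b (m+1) = 0 := by
        simp only [hb, hztail (m+1) le_rfl, mul_zero]
      rw [this]
      simp [hb]
    have eqD : ∑ j ∈ range (m+2), C (d j) * F j
        = ∑ i ∈ range (m+1), C ((u (i+1))⁻¹ * z i) * G i := by
      rw [Finset.sum_range_succ, Finset.sum_range_succ]
      have h1 : d m = 0 := by simp only [hd, hztail (m+1) le_rfl, mul_zero]
      have h2 : d (m+1) = 0 := by simp only [hd, hztail (m+2) (by omega), mul_zero]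
      rw [h1, h2]
      rw [Finset.sum_range_succ' (fun i => C ((u (i+1))⁻¹ * z i) * G i) m]
      simp only [hGs, hG0, mul_zero, add_zero, C_0, C_mul, zero_mul]
      exact Finset.sum_congr rfl fun i _ => by simp only [hd, C_mul]
    rw [eqA, eqB, eqD]
  -- conclude by linear independence
  have hzero : ∑ j ∈ range (m+2), C (z' j - (a j - b j - d j)) * F j = 0 := by
    have : ∑ j ∈ range (m+2), C (z' j - (a j - b j - d j)) * F j =
        (∑ j ∈ range (m+2), C (z' j) * F j)
          - ∑ j ∈ range (m+2), C (a j - b j - d j) * F j := by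
      rw [← Finset.sum_sub_distrib]
      refine Finset.sum_congr rfl fun j _ => ?_
      simp only [C_sub]; ring
    rw [this, ← hz', ← hXn, sub_self]
  intro i hi
  have h := hindep (m+2) _ hzero i (by omega)
  have h' : z' i = a i - b i - d i := by
    have := sub_eq_zero.mp h
    exact this
  rw [h']
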